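/- Let H be a Hilbert space, (g_i) a frame for H with analysis operator U : H → ℓ², U f = (⟨f, gᵢ⟩). If L : ℓ² → H is a bounded operator with L U = id_H (a bounded linear extension of U⁻¹), then (L δᵢ) is a frame for H and f = Σᵢ ⟨f, gᵢ⟩ L δᵢ for every f ∈ H, i.e., (L δᵢ) is a dual frame of (g_i). -/

import Mathlib

set_option maxHeartbeats 1000000


open scoped RealInnerProductSpace

/-- If `(gᵢ)` is a frame with analysis operator `U` and `L : ℓ² → H` is a bounded
left inverse of `U`, then `(L δᵢ)` is a dual frame of `(gᵢ)`. -/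
theorem stmt_10 (H : Type*) [NormedAddCommGroup H] [InnerProductSpace ℝ H] [CompleteSpace H]
    (g : ℕ → H)
    (hframe : ∃ A B : ℝ, 0 < A ∧ 0 < B ∧ ∀ f : H,
      Summable (fun i => ⟪f, g i⟫ ^ 2) ∧
      A * ‖f‖ ^ 2 ≤ ∑' i, ⟪f, g i⟫ ^ 2 ∧ ∑' i, ⟪f, g i⟫ ^ 2 ≤ B * ‖f‖ ^ 2)
    (U : H →L[ℝ] lp (fun _ : ℕ => ℝ) 2) (hU : ∀ (f : H) (i : ℕ), U f i = ⟪f, g i⟫)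
    (L : lp (fun _ : ℕ => ℝ) 2 →L[ℝ] H) (hLU : ∀ f : H, L (U f) = f) :
    (∃ A B : ℝ, 0 < A ∧ 0 < B ∧ ∀ f : H,
      Summable (fun i => ⟪f, L (lp.single 2 i 1)⟫ ^ 2) ∧
      A * ‖f‖ ^ 2 ≤ ∑' i, ⟪f, L (lp.single 2 i 1)⟫ ^ 2 ∧
      ∑' i, ⟪f, L (lp.single 2 i 1)⟫ ^ 2 ≤ B * ‖f‖ ^ 2) ∧
    (∀ f : H, Filter.Tendsto (fun n => ∑ i ∈ Finset.range n, ⟪f, g i⟫ • L (lp.single 2 i 1))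
      Filter.atTop (nhds f)) := by
  set T := ContinuousLinearMap.adjoint L with hT
  have hkey : ∀ (f : H) (i : ℕ), ⟪f, L (lp.single 2 i 1)⟫ = T f i := by
    intro f i
    rw [← ContinuousLinearMap.adjoint_inner_left, lp.inner_single_right]
    simp [RCLike.inner_apply, hT]
  constructor
  · refine ⟨(‖U‖ ^ 2 + 1)⁻¹, ‖L‖ ^ 2 + 1, by positivity, by positivity, fun f => ?_⟩
    have hsum : HasSum (fun i => ⟪f, L (lp.single 2 i 1)⟫ ^ 2) (‖T f‖ ^ 2) := by
      have := lp.hasSum_inner (𝕜 := ℝ) (T f) (T f)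
      rw [real_inner_self_eq_norm_sq] at this
      refine this.congr_fun fun i => ?_
      rw [hkey]
      simp [RCLike.inner_apply, sq]
    have hts : ∑' i, ⟪f, L (lp.single 2 i 1)⟫ ^ 2 = ‖T f‖ ^ 2 := hsum.tsum_eq
    refine ⟨hsum.summable, ?_, ?_⟩
    · rw [hts]
      have h1 : ‖f‖ ^ 2 ≤ ‖T f‖ * (‖U‖ * ‖f‖) := by
        calc ‖f‖ ^ 2 = ⟪f, L (U f)⟫ := by rw [hLU, real_inner_self_eq_norm_sq]
          _ = ⟪T f, U f⟫ := (ContinuousLinearMap.adjoint_inner_left L (U f) f).symm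
          _ ≤ ‖T f‖ * ‖U f‖ := real_inner_le_norm _ _
          _ ≤ ‖T f‖ * (‖U‖ * ‖f‖) := by
              exact mul_le_mul_of_nonneg_left (U.le_opNorm f) (norm_nonneg _)
      have h2 : ‖f‖ ^ 2 ≤ (‖U‖ ^ 2 + 1) * ‖T f‖ ^ 2 := by
        rcases eq_or_lt_of_le (norm_nonneg f) with h0 | h0
        · nlinarith [norm_nonneg (T f), sq_nonneg (‖U‖ * ‖T f‖)]
        · have : ‖f‖ ≤ ‖U‖ * ‖T f‖ := by
            have := h1
            nlinarith [norm_nonneg (T f), norm_nonneg U]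
          nlinarith [norm_nonneg (T f), sq_nonneg ‖T f‖]
      rw [inv_mul_le_iff₀ (by positivity)]
      linarith
    · rw [hts]
      have := T.le_opNorm f
      have hTL : ‖T‖ = ‖L‖ := (ContinuousLinearMap.adjoint :
        (lp (fun _ : ℕ => ℝ) 2 →L[ℝ] H) ≃ₗᵢ⋆[ℝ] _).norm_map L
      have h4 : ‖T f‖ ^ 2 ≤ (‖L‖ * ‖f‖) ^ 2 := by
        apply pow_le_pow_left₀ (norm_nonneg _)
        rw [← hTL]; exact this
      nlinarith [sq_nonneg ‖f‖]
  · intro f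
    have h1 : HasSum (fun i : ℕ => lp.single 2 i (U f i)) (U f) :=
      lp.hasSum_single (by norm_num) (U f)
    have h2 : HasSum (fun i : ℕ => L (lp.single 2 i (U f i))) f := by
      simpa [hLU f] using h1.mapL L
    have h3 : (fun i : ℕ => L (lp.single 2 i (U f i)))
        = fun i => ⟪f, g i⟫ • L (lp.single 2 i 1) := by
      funext i
      rw [← hU f i, ← map_smul, ← lp.single_smul]
      norm_num
    rw [h3] at h2
    exact h2.tendsto_sum_nat
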